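/- Let α ∈ ℕ⁺ be a pattern with more than 6 distinct variables in which every variable occurs exactly twice. Then there exist distinct variables i, j in α such that (1) no variable k satisfies {i,j} ⊆ L_k or {i,j} ⊆ R_k, and (2) α cannot be written as α₁·i·j·α₂·j·i·α₃. -/

import Mathlib

lemma zip_fst_sublist {β : Type*} : ∀ (l : List ℕ) (l' : List β), ((l.zip l').map Prod.fst).Sublist l
  | [], _ => by simp
  | _ :: _, [] => by simp
  | a :: l, b :: l' => by
      simpa using (zip_fst_sublist l l').cons₂ a

lemma zip_snd_sublist {β : Type*} : ∀ (l : List β) (l' : List ℕ), ((l.zip l').map Prod.snd).Sublist l'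
  | [], _ => by simp
  | _ :: _, [] => by simp
  | a :: l, b :: l' => by
      simpa using (zip_snd_sublist l l').cons₂ b

lemma infix_pair_iff_mem_zip {x y : ℕ} : ∀ {l : List ℕ}, [x, y] <:+: l ↔ (x, y) ∈ l.zip l.tail := by
  intro l
  induction l with
  | nil => simp
  | cons a m ih =>
    cases m with
    | nil =>
      simp only [List.tail_cons, List.zip_nil_right, List.not_mem_nil, iff_false]
      intro h
      have := h.length_le
      simp at this
    | cons b t =>
      rw [List.tail_cons, List.zip_cons_cons]
      constructor
      · intro h
        rcases List.infix_cons_iff.1 h with h' | h'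
        · rw [List.cons_prefix_cons, List.cons_prefix_cons] at h'
          obtain ⟨rfl, rfl, -⟩ := h'
          exact List.mem_cons_self
        · exact List.mem_cons_of_mem _ (ih.1 h')
      · intro h
        rcases List.mem_cons.1 h with h | h
        · obtain ⟨rfl, rfl⟩ := Prod.mk.injEq .. ▸ Prod.ext_iff.1 h
          exact ⟨[], t, rfl⟩
        · exact List.infix_cons (ih.2 h)

/-- Let α ∈ ℕ⁺ have more than 6 distinct variables, each occurring exactly
twice. Then there are distinct variables i, j of α such that (1) no variable
k has both i and j among its left neighbours or both among its right
neighbours, and (2) α cannot be written as α₁·i·j·α₂·j·i·α₃. -/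
theorem stmt_11 (α : List ℕ) (hα : α ≠ [])
    (hcard : 6 < α.toFinset.card)
    (hcount : ∀ x ∈ α, α.count x = 2) :
    ∃ i j : ℕ, i ≠ j ∧ i ∈ α ∧ j ∈ α ∧
      (∀ k : ℕ, ¬ ([i, k] <:+: α ∧ [j, k] <:+: α) ∧
                ¬ ([k, i] <:+: α ∧ [k, j] <:+: α)) ∧
      ¬ ∃ α₁ α₂ α₃ : List ℕ,
        α = α₁ ++ [i, j] ++ α₂ ++ [j, i] ++ α₃ := by
  classical
  set S := α.toFinset with hSdef
  set n := S.card with hndef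
  set Z := α.zip α.tail with hZdef
  have hn7 : 7 ≤ n := hcard
  -- the word has length 2n
  have hlen : α.length = 2 * n := by
    have h1 : ∑ a ∈ S, α.count a = α.length := by
      rw [hSdef]
      simpa using Multiset.toFinset_sum_count_eq (α : Multiset ℕ)
    calc α.length = ∑ a ∈ S, α.count a := h1.symm
      _ = ∑ _a ∈ S, 2 :=
        Finset.sum_congr rfl (fun x hx => hcount x (List.mem_toFinset.1 hx))
      _ = 2 * n := by simp [Finset.sum_const, mul_comm, hndef]
  have hZlen : Z.length = 2 * n - 1 := by
    rw [hZdef, List.length_zip, List.length_tail, hlen]; omega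
  -- neighbour sets
  have hLcard : ∀ k ∈ S, (((Z.filter (fun q => q.2 == k)).map Prod.fst).toFinset).card ≤ 2 := by
    intro k hk
    have hc : List.count k (Z.map Prod.snd) ≤ 2 := by
      have hsub : (Z.map Prod.snd).Sublist α :=
        (zip_snd_sublist α α.tail).trans (List.tail_sublist α)
      calc List.count k (Z.map Prod.snd) ≤ List.count k α := hsub.count_le k
        _ = 2 := hcount k (List.mem_toFinset.1 hk)
    calc (((Z.filter (fun q => q.2 == k)).map Prod.fst).toFinset).card
        ≤ ((Z.filter (fun q => q.2 == k)).map Prod.fst).length := List.toFinset_card_le _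
      _ = (Z.filter (fun q => q.2 == k)).length := List.length_map _
      _ = Z.countP (fun q => q.2 == k) := List.countP_eq_length_filter.symm
      _ = List.count k (Z.map Prod.snd) := by
          rw [List.count_eq_countP, List.countP_map]; rfl
      _ ≤ 2 := hc
  have hRcard : ∀ k ∈ S, (((Z.filter (fun q => q.1 == k)).map Prod.snd).toFinset).card ≤ 2 := by
    intro k hk
    have hc : List.count k (Z.map Prod.fst) ≤ 2 := by
      have hsub : (Z.map Prod.fst).Sublist α := zip_fst_sublist α α.tail
      calc List.count k (Z.map Prod.fst) ≤ List.count k α := hsub.count_le k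
        _ = 2 := hcount k (List.mem_toFinset.1 hk)
    calc (((Z.filter (fun q => q.1 == k)).map Prod.snd).toFinset).card
        ≤ ((Z.filter (fun q => q.1 == k)).map Prod.snd).length := List.toFinset_card_le _
      _ = (Z.filter (fun q => q.1 == k)).length := List.length_map _
      _ = Z.countP (fun q => q.1 == k) := List.countP_eq_length_filter.symm
      _ = List.count k (Z.map Prod.fst) := by
          rw [List.count_eq_countP, List.countP_map]; rfl
      _ ≤ 2 := hc
  -- bad pair sets
  set BL : Finset (ℕ × ℕ) :=
    S.biUnion (fun k => S.offDiag.filter (fun p => (p.1, k) ∈ Z ∧ (p.2, k) ∈ Z)) with hBLdef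
  set BR : Finset (ℕ × ℕ) :=
    S.biUnion (fun k => S.offDiag.filter (fun p => (k, p.1) ∈ Z ∧ (k, p.2) ∈ Z)) with hBRdef
  set B2 : Finset (ℕ × ℕ) :=
    S.offDiag.filter (fun p => (p.1, p.2) ∈ Z ∧ (p.2, p.1) ∈ Z) with hB2def
  have hBL : BL.card ≤ 2 * n := by
    refine le_trans Finset.card_biUnion_le (le_trans (Finset.sum_le_sum (fun k hk => ?_))
      (by simp [Finset.sum_const, mul_comm, hndef] : ∑ _k ∈ S, 2 ≤ 2 * n))
    have hsub : S.offDiag.filter (fun p => (p.1, k) ∈ Z ∧ (p.2, k) ∈ Z) ⊆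
        (((Z.filter (fun q => q.2 == k)).map Prod.fst).toFinset).offDiag := by
      intro p hp
      obtain ⟨hpo, h1, h2⟩ := Finset.mem_filter.1 hp
      obtain ⟨-, -, hne⟩ := Finset.mem_offDiag.1 hpo
      refine Finset.mem_offDiag.2 ⟨?_, ?_, hne⟩
      · exact List.mem_toFinset.2 (List.mem_map.2 ⟨(p.1, k),
          List.mem_filter.2 ⟨h1, by simp⟩, rfl⟩)
      · exact List.mem_toFinset.2 (List.mem_map.2 ⟨(p.2, k),
          List.mem_filter.2 ⟨h2, by simp⟩, rfl⟩)
    refine le_trans (Finset.card_le_card hsub) ?_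
    rw [Finset.offDiag_card]
    have hc := hLcard k hk
    set c := (((Z.filter (fun q => q.2 == k)).map Prod.fst).toFinset).card
    have h2c : c * c ≤ 2 * c := Nat.mul_le_mul_right _ hc
    omega
  have hBR : BR.card ≤ 2 * n := by
    refine le_trans Finset.card_biUnion_le (le_trans (Finset.sum_le_sum (fun k hk => ?_))
      (by simp [Finset.sum_const, mul_comm, hndef] : ∑ _k ∈ S, 2 ≤ 2 * n))
    have hsub : S.offDiag.filter (fun p => (k, p.1) ∈ Z ∧ (k, p.2) ∈ Z) ⊆
        (((Z.filter (fun q => q.1 == k)).map Prod.snd).toFinset).offDiag := by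
      intro p hp
      obtain ⟨hpo, h1, h2⟩ := Finset.mem_filter.1 hp
      obtain ⟨-, -, hne⟩ := Finset.mem_offDiag.1 hpo
      refine Finset.mem_offDiag.2 ⟨?_, ?_, hne⟩
      · exact List.mem_toFinset.2 (List.mem_map.2 ⟨(k, p.1),
          List.mem_filter.2 ⟨h1, by simp⟩, rfl⟩)
      · exact List.mem_toFinset.2 (List.mem_map.2 ⟨(k, p.2),
          List.mem_filter.2 ⟨h2, by simp⟩, rfl⟩)
    refine le_trans (Finset.card_le_card hsub) ?_
    rw [Finset.offDiag_card]
    have hc := hRcard k hk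
    set c := (((Z.filter (fun q => q.1 == k)).map Prod.snd).toFinset).card
    have h2c : c * c ≤ 2 * c := Nat.mul_le_mul_right _ hc
    omega
  have hB2 : B2.card ≤ 2 * n - 1 := by
    have hsub : B2 ⊆ Z.toFinset := by
      intro p hp
      obtain ⟨-, h1, -⟩ := Finset.mem_filter.1 hp
      exact List.mem_toFinset.2 (by simpa using h1)
    calc B2.card ≤ Z.toFinset.card := Finset.card_le_card hsub
      _ ≤ Z.length := List.toFinset_card_le _
      _ = 2 * n - 1 := hZlen
  set Bad : Finset (ℕ × ℕ) := BL ∪ BR ∪ B2 with hBaddef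
  have hBadsub : Bad ⊆ S.offDiag := by
    intro p hp
    rcases Finset.mem_union.1 hp with hp | hp
    · rcases Finset.mem_union.1 hp with hp | hp
      · obtain ⟨k, -, hk⟩ := Finset.mem_biUnion.1 hp
        exact (Finset.mem_filter.1 hk).1
      · obtain ⟨k, -, hk⟩ := Finset.mem_biUnion.1 hp
        exact (Finset.mem_filter.1 hk).1
    · exact (Finset.mem_filter.1 hp).1
  have hBadcard : Bad.card < S.offDiag.card := by
    have h1 : Bad.card ≤ BL.card + BR.card + B2.card :=
      le_trans (Finset.card_union_le _ _)
        (by linarith [Finset.card_union_le BL BR])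
    rw [Finset.offDiag_card, ← hndef]
    have h7 : 7 * n ≤ n * n := Nat.mul_le_mul_right n hn7
    have h6 : 6 * n ≤ n * n - n := Nat.le_sub_of_add_le (by linarith)
    have hb : Bad.card ≤ 6 * n - 1 := by omega
    calc Bad.card ≤ 6 * n - 1 := hb
      _ < 6 * n := by omega
      _ ≤ n * n - n := h6
  have hne : (S.offDiag \ Bad).Nonempty := by
    rw [Finset.sdiff_nonempty]
    intro hsub
    exact absurd (Finset.card_le_card hsub) (not_le.2 hBadcard)
  obtain ⟨p, hp⟩ := hne
  obtain ⟨hpo, hpbad⟩ := Finset.mem_sdiff.1 hp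
  obtain ⟨hi, hj, hij⟩ := Finset.mem_offDiag.1 hpo
  refine ⟨p.1, p.2, hij, List.mem_toFinset.1 hi, List.mem_toFinset.1 hj, ?_, ?_⟩
  · intro k
    constructor
    · rintro ⟨h1, h2⟩
      have hz1 : (p.1, k) ∈ Z := infix_pair_iff_mem_zip.1 h1
      have hz2 : (p.2, k) ∈ Z := infix_pair_iff_mem_zip.1 h2
      have hkS : k ∈ S := List.mem_toFinset.2 (List.mem_of_mem_tail (List.of_mem_zip hz1).2)
      exact hpbad (Finset.mem_union_left _ (Finset.mem_union_left _
        (Finset.mem_biUnion.2 ⟨k, hkS, Finset.mem_filter.2 ⟨hpo, hz1, hz2⟩⟩)))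
    · rintro ⟨h1, h2⟩
      have hz1 : (k, p.1) ∈ Z := infix_pair_iff_mem_zip.1 h1
      have hz2 : (k, p.2) ∈ Z := infix_pair_iff_mem_zip.1 h2
      have hkS : k ∈ S := List.mem_toFinset.2 (List.of_mem_zip hz1).1
      exact hpbad (Finset.mem_union_left _ (Finset.mem_union_right _
        (Finset.mem_biUnion.2 ⟨k, hkS, Finset.mem_filter.2 ⟨hpo, hz1, hz2⟩⟩)))
  · rintro ⟨a, b, c, h⟩
    have h1 : [p.1, p.2] <:+: α :=
      ⟨a, b ++ [p.2, p.1] ++ c, by simp [h]⟩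
    have h2 : [p.2, p.1] <:+: α :=
      ⟨a ++ [p.1, p.2] ++ b, c, by simp [h]⟩
    exact hpbad (Finset.mem_union_right _ (Finset.mem_filter.2
      ⟨hpo, infix_pair_iff_mem_zip.1 h1, infix_pair_iff_mem_zip.1 h2⟩))
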